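/- For all real numbers A₁, A₂ ≥ 0 and every real c with |c| ≤ 1, the modulation amplitude of the interference satisfies |√(A₁² + A₂² + 2A₁A₂c) − √(A₁² + A₂² − 2A₁A₂c)| ≤ 2·min(A₁, A₂). -/
import Mathlib

/-- Modulation amplitude bound: for `A₁, A₂ ≥ 0` and `|c| ≤ 1`,
`|√(A₁² + A₂² + 2A₁A₂c) − √(A₁² + A₂² − 2A₁A₂c)| ≤ 2·min(A₁, A₂)`. -/
theorem modulation_amplitude_le (A₁ A₂ c : ℝ) (hA₁ : 0 ≤ A₁) (hA₂ : 0 ≤ A₂)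
    (hc : |c| ≤ 1) :
    |Real.sqrt (A₁ ^ 2 + A₂ ^ 2 + 2 * A₁ * A₂ * c) -
        Real.sqrt (A₁ ^ 2 + A₂ ^ 2 - 2 * A₁ * A₂ * c)| ≤ 2 * min A₁ A₂ := by
  have hub : ∀ d : ℝ, |d| ≤ 1 → Real.sqrt (A₁^2+A₂^2+2*A₁*A₂*d) ≤ A₁+A₂ := by
    intro d hd
    have hd2 := abs_le.mp hd
    have h : A₁^2+A₂^2+2*A₁*A₂*d ≤ (A₁+A₂)^2 := by
      nlinarith [mul_nonneg (mul_nonneg hA₁ hA₂) (by linarith [hd2.2] : (0:ℝ) ≤ 1 - d)]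
    calc Real.sqrt (A₁^2+A₂^2+2*A₁*A₂*d) ≤ Real.sqrt ((A₁+A₂)^2) :=
          Real.sqrt_le_sqrt h
      _ = A₁+A₂ := Real.sqrt_sq (by linarith)
  have hlb : ∀ d : ℝ, |d| ≤ 1 → |A₁-A₂| ≤ Real.sqrt (A₁^2+A₂^2+2*A₁*A₂*d) := by
    intro d hd
    have hd2 := abs_le.mp hd
    have h : (A₁-A₂)^2 ≤ A₁^2+A₂^2+2*A₁*A₂*d := by
      nlinarith [mul_nonneg (mul_nonneg hA₁ hA₂) (by linarith [hd2.1] : (0:ℝ) ≤ d + 1)]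
    calc |A₁-A₂| = Real.sqrt ((A₁-A₂)^2) := (Real.sqrt_sq_eq_abs _).symm
      _ ≤ _ := Real.sqrt_le_sqrt h
  have hc' : |(-c)| ≤ 1 := by rwa [abs_neg]
  have e : A₁^2+A₂^2 - 2*A₁*A₂*c = A₁^2+A₂^2 + 2*A₁*A₂*(-c) := by ring
  rw [e]
  have h1u := hub c hc
  have h1l := hlb c hc
  have h2u := hub (-c) hc'
  have h2l := hlb (-c) hc'
  have hmin : 2 * min A₁ A₂ = A₁ + A₂ - |A₁-A₂| := by
    rcases le_total A₁ A₂ with h | h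
    · rw [min_eq_left h, abs_of_nonpos (by linarith)]; ring
    · rw [min_eq_right h, abs_of_nonneg (by linarith)]; ring
  rw [hmin, abs_le]
  constructor <;> linarith
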